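/- Let G be a nonempty type and let f, g : (ℝ² → G) → ℝ be cylindrical functions, i.e. there exists a finite set P ⊆ ℝ² such that f(s) = f(s') and g(s) = g(s') whenever s, s' : ℝ² → G agree on P. Suppose that for every m ∈ ℕ, f and g agree on every level-m configuration (every s : ℝ² → G with s(p) = s(q) whenever L_m(p) = L_m(q)). Then f = g on all of (ℝ² → G). That is, two cylindrical functions of the continuum are different if and only if their regularizations to some sufficiently fine scale are different. -/
import Mathlib


/-- The level-`m` dyadic label map `L_m : ℝ² → ℤ²`. -/
noncomputable def dyadicLabel (m : ℕ) (p : ℝ × ℝ) : ℤ × ℤ :=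
  (⌊(2 : ℝ) ^ m * p.1⌋, ⌊(2 : ℝ) ^ m * p.2⌋)

lemma floor_sep (a b : ℝ) (h : a ≠ b) :
    ∃ m : ℕ, ∀ n ≥ m, ⌊(2 : ℝ) ^ n * a⌋ ≠ ⌊(2 : ℝ) ^ n * b⌋ := by
  have hab : (0 : ℝ) < |a - b| := abs_pos.mpr (sub_ne_zero.mpr h)
  obtain ⟨m, hm⟩ := pow_unbounded_of_one_lt (1 / |a - b|) (one_lt_two (α := ℝ))
  refine ⟨m, fun n hn hfl => ?_⟩
  have h1 : |(2 : ℝ) ^ n * a - (2 : ℝ) ^ n * b| < 1 := by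
    rw [abs_sub_lt_iff]
    constructor
    · calc (2:ℝ)^n * a - 2^n * b < (⌊(2:ℝ)^n * a⌋ + 1) - ⌊(2:ℝ)^n * b⌋ := by
            have := Int.lt_floor_add_one ((2:ℝ)^n * a)
            have := Int.floor_le ((2:ℝ)^n * b)
            linarith
        _ = 1 := by rw [hfl]; ring
    · calc (2:ℝ)^n * b - 2^n * a < (⌊(2:ℝ)^n * b⌋ + 1) - ⌊(2:ℝ)^n * a⌋ := by
            have := Int.lt_floor_add_one ((2:ℝ)^n * b)
            have := Int.floor_le ((2:ℝ)^n * a)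
            linarith
        _ = 1 := by rw [hfl]; ring
  have h2 : (2:ℝ)^n * |a - b| < 1 := by
    rwa [← abs_of_pos (pow_pos (by norm_num : (0:ℝ) < 2) n), ← abs_mul, mul_sub]
  have h3 : (2:ℝ)^m ≤ (2:ℝ)^n := pow_le_pow_right₀ (by norm_num) hn
  have h4 : 1 / |a - b| < (2:ℝ)^n := lt_of_lt_of_le hm h3
  have h5 : 1 < (2:ℝ)^n * |a - b| := by
    rw [div_lt_iff₀ hab] at h4; linarith
  linarith

lemma label_sep (p q : ℝ × ℝ) (h : p ≠ q) :
    ∃ m : ℕ, ∀ n ≥ m, dyadicLabel n p ≠ dyadicLabel n q := by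
  rcases eq_or_ne p.1 q.1 with h1 | h1
  · have h2 : p.2 ≠ q.2 := fun h2 => h (Prod.ext h1 h2)
    obtain ⟨m, hm⟩ := floor_sep p.2 q.2 h2
    exact ⟨m, fun n hn heq => hm n hn (congrArg Prod.snd heq)⟩
  · obtain ⟨m, hm⟩ := floor_sep p.1 q.1 h1
    exact ⟨m, fun n hn heq => hm n hn (congrArg Prod.fst heq)⟩

/-- Two cylindrical functions of the continuum that have equal regularizations to every
dyadic scale (i.e. agree on all level-`m` configurations for every `m`) are equal. -/
theorem cylindrical_eq_of_eq_on_effective (G : Type*) [Nonempty G]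
    (f g : ((ℝ × ℝ) → G) → ℝ)
    (hcyl : ∃ P : Finset (ℝ × ℝ),
      (∀ s s' : (ℝ × ℝ) → G, (∀ p ∈ P, s p = s' p) → f s = f s') ∧
      (∀ s s' : (ℝ × ℝ) → G, (∀ p ∈ P, s p = s' p) → g s = g s'))
    (heff : ∀ m : ℕ, ∀ s : (ℝ × ℝ) → G,
      (∀ p q : ℝ × ℝ, dyadicLabel m p = dyadicLabel m q → s p = s q) → f s = g s) :
    f = g := by
  classical
  obtain ⟨P, hf, hg⟩ := hcyl
  -- scale function for pairs
  let msep : (ℝ × ℝ) → (ℝ × ℝ) → ℕ := fun p q =>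
    if h : p ≠ q then (label_sep p q h).choose else 0
  let M : ℕ := (P ×ˢ P).sup fun pq => msep pq.1 pq.2
  have hinj : ∀ p ∈ P, ∀ q ∈ P, dyadicLabel M p = dyadicLabel M q → p = q := by
    intro p hp q hq heq
    by_contra hne
    have hle : msep p q ≤ M :=
      Finset.le_sup (f := fun pq => msep pq.1 pq.2) (Finset.mk_mem_product hp hq)
    have : msep p q = (label_sep p q hne).choose := by simp [msep, hne]
    exact (label_sep p q hne).choose_spec M (this ▸ hle) heq
  funext s
  -- build a level-M configuration agreeing with s on P
  let t : ℤ × ℤ → G := fun ℓ =>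
    if h : ∃ p : P, dyadicLabel M (p : ℝ × ℝ) = ℓ then s (h.choose : ℝ × ℝ)
    else Classical.arbitrary G
  let s' : (ℝ × ℝ) → G := fun x => t (dyadicLabel M x)
  have hconf : ∀ p q : ℝ × ℝ, dyadicLabel M p = dyadicLabel M q → s' p = s' q := by
    intro p q h; simp only [s', h]
  have hagree : ∀ p ∈ P, s p = s' p := by
    intro p hp
    have hex : ∃ r : P, dyadicLabel M (r : ℝ × ℝ) = dyadicLabel M p := ⟨⟨p, hp⟩, rfl⟩
    have : s' p = s (hex.choose : ℝ × ℝ) := dif_pos hex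
    rw [this]
    have := hex.choose_spec
    have heq : (hex.choose : ℝ × ℝ) = p := hinj _ hex.choose.2 p hp this
    rw [heq]
  calc f s = f s' := hf s s' hagree
    _ = g s' := heff M s' hconf
    _ = g s := (hg s s' hagree).symm
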